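/- The closed conical hull of C × {1} in X × ℝ equals the disjoint union of cone(C × {1}) and rec(C) × {0}. -/

import Mathlib

open scoped Pointwise
open Filter Topology

theorem clcone_homogenization_decomposition
    {X : Type*} [NormedAddCommGroup X] [InnerProductSpace ℝ X] [CompleteSpace X]
    (C : Set X) (hcl : IsClosed C) (hconv : Convex ℝ C) (h0 : (0 : X) ∈ C) :
    closure (⋃ ρ ∈ Set.Ioi (0 : ℝ), ρ • (C ×ˢ ({1} : Set ℝ))) =
        (⋃ ρ ∈ Set.Ioi (0 : ℝ), ρ • (C ×ˢ ({1} : Set ℝ))) ∪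
          ({v : X | ∀ c ∈ C, v + c ∈ C} ×ˢ ({0} : Set ℝ)) ∧
      Disjoint (⋃ ρ ∈ Set.Ioi (0 : ℝ), ρ • (C ×ˢ ({1} : Set ℝ)))
        ({v : X | ∀ c ∈ C, v + c ∈ C} ×ˢ ({0} : Set ℝ)) := by
  set K := ⋃ ρ ∈ Set.Ioi (0 : ℝ), ρ • (C ×ˢ ({1} : Set ℝ)) with hKdef
  have memK : ∀ p : X × ℝ, p ∈ K ↔ ∃ ρ : ℝ, 0 < ρ ∧ ∃ c ∈ C, p = (ρ • c, ρ) := by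
    intro p
    simp only [hKdef, Set.mem_iUnion, Set.mem_smul_set, Set.mem_prod, Set.mem_Ioi,
      Set.mem_singleton_iff]
    constructor
    · rintro ⟨ρ, hρ, ⟨c, r⟩, ⟨hc, (rfl : r = 1)⟩, rfl⟩
      exact ⟨ρ, hρ, c, hc, by simp [Prod.smul_mk]⟩
    · rintro ⟨ρ, hρ, c, hc, rfl⟩
      exact ⟨ρ, hρ, (c, 1), ⟨hc, rfl⟩, by simp [Prod.smul_mk]⟩
  refine ⟨Set.Subset.antisymm ?_ ?_, ?_⟩
  · -- closure K ⊆ K ∪ rec(C) × {0}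
    intro p hp
    obtain ⟨u, hu, hlim⟩ := mem_closure_iff_seq_limit.1 hp
    choose ρ hρ c hc hueq using fun n => (memK (u n)).1 (hu n)
    have hρlim : Tendsto ρ atTop (𝓝 p.2) := by
      exact ((continuous_snd.tendsto p).comp hlim).congr fun n => by
        simp [Function.comp, hueq n]
    have h1lim : Tendsto (fun n => ρ n • c n) atTop (𝓝 p.1) := by
      exact ((continuous_fst.tendsto p).comp hlim).congr fun n => by
        simp [Function.comp, hueq n]
    have hp2 : 0 ≤ p.2 :=
      le_of_tendsto_of_tendsto' tendsto_const_nhds hρlim fun n => (hρ n).le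
    rcases eq_or_lt_of_le hp2 with h2 | h2
    · -- p.2 = 0 : p.1 is a recession direction
      right
      refine Set.mem_prod.2 ⟨?_, h2.symm⟩
      intro c0 hc0
      have hev : ∀ᶠ n in atTop, ρ n < 1 :=
        hρlim.eventually (gt_mem_nhds (show p.2 < 1 by linarith))
      have htend : Tendsto (fun n => (1 - ρ n) • c0 + ρ n • c n) atTop
          (𝓝 ((1 - p.2) • c0 + p.1)) :=
        ((tendsto_const_nhds.sub hρlim).smul tendsto_const_nhds).add h1lim
      have hmem : ∀ᶠ n in atTop, (1 - ρ n) • c0 + ρ n • c n ∈ C := by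
        filter_upwards [hev] with n hn
        exact hconv hc0 (hc n) (by linarith) (hρ n).le (by ring)
      have hCmem : (1 - p.2) • c0 + p.1 ∈ C := hcl.mem_of_tendsto htend hmem
      have : c0 + p.1 ∈ C := by
        have : (1 - p.2) • c0 + p.1 = c0 + p.1 := by rw [← h2]; simp
        rwa [this] at hCmem
      rwa [add_comm] at this
    · -- p.2 > 0 : p ∈ K
      left
      rw [memK]
      refine ⟨p.2, h2, (p.2)⁻¹ • p.1, ?_, ?_⟩
      · have hctend : Tendsto c atTop (𝓝 ((p.2)⁻¹ • p.1)) := by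
          have := (hρlim.inv₀ h2.ne').smul h1lim
          exact this.congr fun n => inv_smul_smul₀ (hρ n).ne' (c n)
        exact hcl.mem_of_tendsto hctend (Eventually.of_forall hc)
      · ext
        · simp [smul_inv_smul₀ h2.ne']
        · rfl
  · -- K ∪ rec(C) × {0} ⊆ closure K
    intro p hp
    rcases hp with hp | hp
    · exact subset_closure hp
    · obtain ⟨hv, hz⟩ := Set.mem_prod.1 hp
      have hz : p.2 = 0 := hz
      have hnat : ∀ n : ℕ, (n : ℝ) • p.1 ∈ C := by
        intro n
        induction n with
        | zero => simpa using h0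
        | succ n ih =>
          have : ((n + 1 : ℕ) : ℝ) • p.1 = p.1 + (n : ℝ) • p.1 := by
            push_cast; module
          rw [this]; exact hv _ ih
      apply mem_closure_iff_seq_limit.2
      refine ⟨fun n => (p.1, ((n : ℝ) + 1)⁻¹), fun n => ?_, ?_⟩
      · rw [memK]
        refine ⟨((n : ℝ) + 1)⁻¹, by positivity, ((n : ℝ) + 1) • p.1, ?_, ?_⟩
        · exact_mod_cast hnat (n + 1)
        · rw [inv_smul_smul₀ (by positivity)]
      · rw [show p = (p.1, p.2) from rfl, hz]
        refine Tendsto.prodMk_nhds tendsto_const_nhds ?_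
        simpa [one_div] using tendsto_one_div_add_atTop_nhds_zero_nat (𝕜 := ℝ)
  · -- disjointness
    rw [Set.disjoint_left]
    intro p hp1 hp2
    obtain ⟨ρ, hρ, c, hc, rfl⟩ := (memK p).1 hp1
    have : ρ = 0 := (Set.mem_prod.1 hp2).2
    exact absurd this hρ.ne'
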